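/- Let 0 < α < 1 and r > 0. For every complex number ω, (1/(2π)) ∫_0^{2π} |r e^{iθ} − ω|^{−α} dθ ≤ 1/((1−α) r^α). -/

import Mathlib

open Real Complex MeasureTheory intervalIntegral

-- measurability of the integrand
lemma cipr_meas (α r : ℝ) (hα0 : 0 < α) (w : ℂ) :
    Measurable (fun θ : ℝ => ‖(r : ℂ) * Complex.exp (θ * Complex.I) - w‖ ^ (-α)) := by
  have hc : Continuous (fun θ : ℝ => ‖(r : ℂ) * Complex.exp (θ * Complex.I) - w‖) := by
    fun_prop
  have heq : (fun θ : ℝ => ‖(r : ℂ) * Complex.exp (θ * Complex.I) - w‖ ^ (-α)) =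
      fun θ : ℝ => if ‖(r : ℂ) * Complex.exp (θ * Complex.I) - w‖ = 0 then 0
        else Real.exp (Real.log ‖(r : ℂ) * Complex.exp (θ * Complex.I) - w‖ * (-α)) := by
    ext θ
    split_ifs with h
    · rw [h, Real.zero_rpow (by linarith)]
    · rw [Real.rpow_def_of_pos (lt_of_le_of_ne (norm_nonneg _) (Ne.symm h))]
  rw [heq]
  exact Measurable.ite (hc.measurable (measurableSet_singleton 0))
    measurable_const
    (Real.measurable_exp.comp ((Real.measurable_log.comp hc.measurable).mul_const _))

-- key pointwise bound
lemma cipr_key {α r : ℝ} (hα0 : 0 < α) (hr : 0 < r) (ρ : ℝ) {θ u : ℝ}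
    (hu : 0 < u) (hus : 2 / π * u ≤ |Real.sin θ|) :
    ‖(r : ℂ) * Complex.exp (θ * Complex.I) - (ρ : ℂ)‖ ^ (-α) ≤
      (2 * r / π) ^ (-α) * u ^ (-α) := by
  have hπ := Real.pi_pos
  have him : ((r : ℂ) * Complex.exp (θ * Complex.I) - (ρ : ℂ)).im = r * Real.sin θ := by
    simp [Complex.sub_im, Complex.mul_im, Complex.exp_ofReal_mul_I_im,
      Complex.exp_ofReal_mul_I_re]
  have h1 : 2 * r / π * u ≤ ‖(r : ℂ) * Complex.exp (θ * Complex.I) - (ρ : ℂ)‖ := by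
    have h2 : 2 * r / π * u = r * (2 / π * u) := by ring
    calc 2 * r / π * u = r * (2 / π * u) := h2
      _ ≤ r * |Real.sin θ| := by
          exact mul_le_mul_of_nonneg_left hus hr.le
      _ = |r * Real.sin θ| := by
          rw [abs_mul, _root_.abs_of_nonneg hr.le]
      _ = |((r : ℂ) * Complex.exp (θ * Complex.I) - (ρ : ℂ)).im| := by rw [him]
      _ ≤ ‖(r : ℂ) * Complex.exp (θ * Complex.I) - (ρ : ℂ)‖ := by
          exact Complex.abs_im_le_norm _
  have hpos : 0 < 2 * r / π * u := by positivity
  calc ‖(r : ℂ) * Complex.exp (θ * Complex.I) - (ρ : ℂ)‖ ^ (-α)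
      ≤ (2 * r / π * u) ^ (-α) :=
        Real.rpow_le_rpow_of_nonpos hpos h1 (neg_nonpos.2 hα0.le)
    _ = (2 * r / π) ^ (-α) * u ^ (-α) :=
        Real.mul_rpow (by positivity) hu.le

lemma ae_ne_pt (c : ℝ) : ∀ᵐ θ : ℝ, θ ≠ c := by
  rw [MeasureTheory.ae_iff]
  simp only [ne_eq, not_not, Set.setOf_eq_eq_singleton]
  exact measure_singleton c

-- quadrant machinery
lemma cipr_quad {α r : ℝ} (hα0 : 0 < α) (hr : 0 < r) (ρ : ℝ)
    {a b bad : ℝ} (hab : a ≤ b) (g : ℝ → ℝ) (hg : IntervalIntegrable g volume a b)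
    (hbound : ∀ θ ∈ Set.Icc a b, θ ≠ bad →
      ‖(r : ℂ) * Complex.exp (θ * Complex.I) - (ρ : ℂ)‖ ^ (-α) ≤ g θ) :
    IntervalIntegrable
        (fun θ : ℝ => ‖(r : ℂ) * Complex.exp (θ * Complex.I) - (ρ : ℂ)‖ ^ (-α)) volume a b ∧
      (∫ θ in a..b, ‖(r : ℂ) * Complex.exp (θ * Complex.I) - (ρ : ℂ)‖ ^ (-α)) ≤
        ∫ θ in a..b, g θ := by
  have hGm := cipr_meas α r hα0 (ρ : ℂ)
  have hsub : Set.uIoc a b ⊆ Set.Icc a b := by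
    rw [Set.uIoc_of_le hab]; exact Set.Ioc_subset_Icc_self
  have haeI : ∀ᵐ θ : ℝ ∂(volume.restrict (Set.Icc a b)),
      ‖(r : ℂ) * Complex.exp (θ * Complex.I) - (ρ : ℂ)‖ ^ (-α) ≤ g θ := by
    filter_upwards [ae_restrict_mem measurableSet_Icc, ae_restrict_of_ae (ae_ne_pt bad)]
      with θ h1 h2
    exact hbound θ h1 h2
  have haeU : (fun θ : ℝ => ‖‖(r : ℂ) * Complex.exp (θ * Complex.I) - (ρ : ℂ)‖ ^ (-α)‖)
      ≤ᵐ[volume.restrict (Set.uIoc a b)] g := by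
    filter_upwards [ae_restrict_mem measurableSet_uIoc, ae_restrict_of_ae (ae_ne_pt bad)]
      with θ h1 h2
    rw [Real.norm_eq_abs, _root_.abs_of_nonneg (Real.rpow_nonneg (norm_nonneg _) _)]
    exact hbound θ (hsub h1) h2
  have hint : IntervalIntegrable
      (fun θ : ℝ => ‖(r : ℂ) * Complex.exp (θ * Complex.I) - (ρ : ℂ)‖ ^ (-α)) volume a b :=
    hg.mono_fun' hGm.aestronglyMeasurable.restrict haeU
  exact ⟨hint, integral_mono_ae_restrict hab hint hg haeI⟩

set_option maxHeartbeats 1000000 in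
theorem circle_integral_inv_rpow (α : ℝ) (hα0 : 0 < α) (hα1 : α < 1)
    (r : ℝ) (hr : 0 < r) (ω : ℂ) :
    (1 / (2 * π)) * ∫ θ in (0:ℝ)..(2 * π),
        ‖(r : ℂ) * Complex.exp (θ * Complex.I) - ω‖ ^ (-α) ≤
      1 / ((1 - α) * r ^ α) := by
  have hπ := Real.pi_pos
  set ρ : ℝ := ‖ω‖ with hρdef
  set φ : ℝ := Complex.arg ω with hφdef
  set F : ℝ → ℝ := fun θ => ‖(r : ℂ) * Complex.exp (θ * Complex.I) - ω‖ ^ (-α) with hF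
  set G : ℝ → ℝ := fun θ => ‖(r : ℂ) * Complex.exp (θ * Complex.I) - (ρ : ℂ)‖ ^ (-α) with hG
  -- Step 1: rotate
  have hper : Function.Periodic F (2 * π) := by
    intro θ
    have hexp : Complex.exp (((θ + 2 * π : ℝ) : ℂ) * Complex.I)
        = Complex.exp ((θ : ℂ) * Complex.I) := by
      push_cast
      rw [add_mul, Complex.exp_add, Complex.exp_two_pi_mul_I, mul_one]
    simp only [hF, hexp]
  have hFG : ∀ θ : ℝ, F (θ + φ) = G θ := by
    intro θ
    have key : (r : ℂ) * Complex.exp (((θ + φ : ℝ) : ℂ) * Complex.I) - ω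
        = Complex.exp ((φ : ℂ) * Complex.I)
          * ((r : ℂ) * Complex.exp ((θ : ℂ) * Complex.I) - (ρ : ℂ)) := by
      rw [mul_sub]
      have h1 : Complex.exp ((φ : ℂ) * Complex.I) * (ρ : ℂ) = ω := by
        rw [mul_comm]; exact Complex.norm_mul_exp_arg_mul_I ω
      rw [h1]
      congr 1
      push_cast
      rw [add_mul, Complex.exp_add]
      ring
    simp only [hF, hG, key, norm_mul, map_mul,
      Complex.norm_exp_ofReal_mul_I, one_mul]
  have hshift : ∫ θ in (0:ℝ)..(2 * π), F θ = ∫ θ in (0:ℝ)..(2 * π), G θ := by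
    have h1 : ∫ θ in (0:ℝ)..(2 * π), G θ = ∫ θ in (0:ℝ)..(2 * π), F (θ + φ) := by
      simp only [hFG]
    rw [h1, intervalIntegral.integral_comp_add_right F φ, zero_add, add_comm (2 * π) φ]
    exact ((hper.intervalIntegral_add_eq φ 0).trans (by rw [zero_add])).symm
  -- Step 2: quadrant bounds
  set C : ℝ := (2 * r / π) ^ (-α) with hC
  have hα' : (-1 : ℝ) < -α := by linarith
  have hbase : IntervalIntegrable (fun x : ℝ => C * x ^ (-α)) volume 0 (π / 2) :=
    (intervalIntegrable_rpow' hα').const_mul C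
  have hq1 := cipr_quad (bad := 0) hα0 hr ρ (by linarith : (0:ℝ) ≤ π / 2)
    (fun θ => C * θ ^ (-α)) hbase
    (by
      intro θ hθ hne
      have hθ0 : 0 < θ := lt_of_le_of_ne hθ.1 (Ne.symm hne)
      exact cipr_key hα0 hr ρ hθ0
        ((Real.mul_le_sin hθ0.le hθ.2).trans (le_abs_self _)))
  have hq2 := cipr_quad (bad := π) hα0 hr ρ (by linarith : π / 2 ≤ π)
    (fun θ => C * (π - θ) ^ (-α))
    (by
      have h := ((intervalIntegrable_rpow' (a := 0) (b := π / 2) hα').const_mul C).comp_sub_left π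
      rw [sub_zero, show π - π / 2 = π / 2 from by ring] at h
      exact h.symm)
    (by
      intro θ hθ hne
      have hu0 : 0 < π - θ := by
        rcases lt_or_eq_of_le hθ.2 with h | h
        · linarith
        · exact absurd h hne
      have hu2 : π - θ ≤ π / 2 := by linarith [hθ.1]
      refine cipr_key hα0 hr ρ hu0 ?_
      calc 2 / π * (π - θ) ≤ Real.sin (π - θ) := Real.mul_le_sin hu0.le hu2
        _ = Real.sin θ := Real.sin_pi_sub θ
        _ ≤ |Real.sin θ| := le_abs_self _)
  have hq3 := cipr_quad (bad := π) hα0 hr ρ (by linarith : π ≤ π + π / 2)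
    (fun θ => C * (θ - π) ^ (-α))
    (by
      have h := ((intervalIntegrable_rpow' (a := 0) (b := π / 2) hα').const_mul C).comp_sub_right π
      rw [zero_add, show π / 2 + π = π + π / 2 from by ring] at h
      exact h)
    (by
      intro θ hθ hne
      have hu0 : 0 < θ - π := by
        rcases lt_or_eq_of_le hθ.1 with h | h
        · linarith
        · exact absurd h.symm hne
      have hu2 : θ - π ≤ π / 2 := by linarith [hθ.2]
      refine cipr_key hα0 hr ρ hu0 ?_
      calc 2 / π * (θ - π) ≤ Real.sin (θ - π) := Real.mul_le_sin hu0.le hu2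
        _ = -Real.sin θ := Real.sin_sub_pi θ
        _ ≤ |Real.sin θ| := neg_le_abs _)
  have hq4 := cipr_quad (bad := 2 * π) hα0 hr ρ (by linarith : π + π / 2 ≤ 2 * π)
    (fun θ => C * (2 * π - θ) ^ (-α))
    (by
      have h := ((intervalIntegrable_rpow' (a := 0) (b := π / 2) hα').const_mul C).comp_sub_left (2 * π)
      rw [sub_zero, show 2 * π - π / 2 = π + π / 2 from by ring] at h
      exact h.symm)
    (by
      intro θ hθ hne
      have hu0 : 0 < 2 * π - θ := by
        rcases lt_or_eq_of_le hθ.2 with h | h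
        · linarith
        · exact absurd h hne
      have hu2 : 2 * π - θ ≤ π / 2 := by linarith [hθ.1]
      refine cipr_key hα0 hr ρ hu0 ?_
      calc 2 / π * (2 * π - θ) ≤ Real.sin (2 * π - θ) := Real.mul_le_sin hu0.le hu2
        _ = -Real.sin θ := Real.sin_two_pi_sub θ
        _ ≤ |Real.sin θ| := neg_le_abs _)
  -- Step 3: value of the model integral
  have h1mα : (0:ℝ) < 1 - α := by linarith
  have hJ : ∫ x in (0:ℝ)..(π / 2), C * x ^ (-α) = C * ((π / 2) ^ (1 - α) / (1 - α)) := by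
    rw [intervalIntegral.integral_const_mul, integral_rpow (Or.inl hα'),
      Real.zero_rpow (by linarith : -α + 1 ≠ 0), show -α + 1 = 1 - α from by ring]
    ring
  have hCJ : C * ((π / 2) ^ (1 - α) / (1 - α)) = π / 2 * r ^ (-α) / (1 - α) := by
    have h2 : (π / 2 : ℝ) ^ (1 - α) = π / 2 * (π / 2) ^ (-α) := by
      rw [show (1 : ℝ) - α = 1 + -α from by ring, Real.rpow_add (by positivity),
        Real.rpow_one]
    have h3 : (2 * r / π) ^ (-α) * (π / 2) ^ (-α) = r ^ (-α) := by
      rw [← Real.mul_rpow (by positivity) (by positivity)]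
      congr 1
      field_simp
    rw [hC, h2, show (2 * r / π) ^ (-α) * (π / 2 * (π / 2) ^ (-α) / (1 - α))
        = (2 * r / π) ^ (-α) * (π / 2) ^ (-α) * (π / 2) / (1 - α) from by ring, h3]
    ring
  -- Step 4: transfer quadrant integrals to the model one
  have hI2 : ∫ θ in (π / 2)..π, C * (π - θ) ^ (-α)
      = ∫ x in (0:ℝ)..(π / 2), C * x ^ (-α) := by
    have := intervalIntegral.integral_comp_sub_left (a := π / 2) (b := π)
      (fun x => C * x ^ (-α)) π
    rw [sub_self, show π - π / 2 = π / 2 from by ring] at this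
    exact this
  have hI3 : ∫ θ in π..(π + π / 2), C * (θ - π) ^ (-α)
      = ∫ x in (0:ℝ)..(π / 2), C * x ^ (-α) := by
    have := intervalIntegral.integral_comp_sub_right (a := π) (b := π + π / 2)
      (fun x => C * x ^ (-α)) π
    rw [sub_self, show π + π / 2 - π = π / 2 from by ring] at this
    exact this
  have hI4 : ∫ θ in (π + π / 2)..(2 * π), C * (2 * π - θ) ^ (-α)
      = ∫ x in (0:ℝ)..(π / 2), C * x ^ (-α) := by
    have := intervalIntegral.integral_comp_sub_left (a := π + π / 2) (b := 2 * π)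
      (fun x => C * x ^ (-α)) (2 * π)
    rw [sub_self, show 2 * π - (π + π / 2) = π / 2 from by ring] at this
    exact this
  -- Step 5: split and sum
  have hsplit : ∫ θ in (0:ℝ)..(2 * π), G θ
      = (∫ θ in (0:ℝ)..(π / 2), G θ) + (∫ θ in (π / 2)..π, G θ)
        + (∫ θ in π..(π + π / 2), G θ) + (∫ θ in (π + π / 2)..(2 * π), G θ) := by
    rw [integral_add_adjacent_intervals hq1.1 hq2.1,
      integral_add_adjacent_intervals (hq1.1.trans hq2.1) hq3.1,
      integral_add_adjacent_intervals ((hq1.1.trans hq2.1).trans hq3.1) hq4.1]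
  have htotal : ∫ θ in (0:ℝ)..(2 * π), G θ ≤ 2 * π * r ^ (-α) / (1 - α) := by
    rw [hsplit]
    have b1 := hq1.2
    have b2 := hq2.2; rw [hI2] at b2
    have b3 := hq3.2; rw [hI3] at b3
    have b4 := hq4.2; rw [hI4] at b4
    rw [hJ, hCJ] at b1 b2 b3 b4
    rw [hG]
    have hsum := add_le_add (add_le_add (add_le_add b1 b2) b3) b4
    exact le_trans hsum (le_of_eq (by ring))
  -- Step 6: conclude
  rw [hshift]
  have hfin : (1 / (2 * π)) * (2 * π * r ^ (-α) / (1 - α)) = 1 / ((1 - α) * r ^ α) := by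
    rw [Real.rpow_neg hr.le]
    have hrα : (0:ℝ) < r ^ α := Real.rpow_pos_of_pos hr α
    field_simp
  calc (1 / (2 * π)) * ∫ θ in (0:ℝ)..(2 * π), G θ
      ≤ (1 / (2 * π)) * (2 * π * r ^ (-α) / (1 - α)) :=
        mul_le_mul_of_nonneg_left htotal (by positivity)
    _ = 1 / ((1 - α) * r ^ α) := hfin
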